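/- Let u be a nonzero vector in R^m embedded in the Clifford algebra R_{0,m}, let a ∈ R_{0,m}, and let c₁, c₂ ∈ R with c₁ ≠ c₂ and c₁ ≠ -c₂. If c₁·a·u + c₂·u·a = 0, then a = 0. -/
import Mathlib


noncomputable section

open CliffordAlgebra

/-- The quadratic form `x ↦ -∑ xᵢ²` on `ℝ^m`, so that `CliffordAlgebra (Qf m)` is the
real Clifford algebra `R_{0,m}` with generators `e i` satisfying
`e i * e j + e j * e i = -2 δ_{ij}`. -/
def Qf (m : ℕ) : QuadraticForm ℝ (Fin m → ℝ) :=
  QuadraticMap.weightedSumSquares ℝ (fun _ : Fin m => (-1 : ℝ))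

/-- The generator `e i` of `R_{0,m}`. -/
def e (m : ℕ) (i : Fin m) : CliffordAlgebra (Qf m) :=
  ι (Qf m) (Pi.single i 1)

lemma Qf_ne_zero (m : ℕ) (u : Fin m → ℝ) (hu : u ≠ 0) : Qf m u ≠ 0 := by
  have : Qf m u = ∑ i, -1 * (u i * u i) := by
    simp [Qf, QuadraticMap.weightedSumSquares_apply]
  rw [this]
  have heq : ∑ i, -1 * (u i * u i) = -∑ i, u i ^ 2 := by
    rw [← Finset.sum_neg_distrib]; congr 1; ext i; ring
  rw [heq]
  have hpos : 0 < ∑ i, u i ^ 2 := by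
    have : ∃ i, u i ≠ 0 := by
      by_contra hc
      push_neg at hc
      exact hu (funext hc)
    obtain ⟨i, hi⟩ := this
    apply Finset.sum_pos' (fun j _ => sq_nonneg _) ⟨i, Finset.mem_univ i, by positivity⟩
  linarith

/-- If `u` is a nonzero vector of `ℝ^m` embedded in `R_{0,m}`,
`a ∈ R_{0,m}`, and `c₁, c₂ ∈ ℝ` with `c₁ ≠ c₂` and `c₁ ≠ -c₂`, then
`c₁·a·u + c₂·u·a = 0` implies `a = 0`. -/
theorem stmt_4 (m : ℕ) (u : Fin m → ℝ) (hu : u ≠ 0) (a : CliffordAlgebra (Qf m))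
    (c₁ c₂ : ℝ) (h₁ : c₁ ≠ c₂) (h₂ : c₁ ≠ -c₂)
    (h : c₁ • (a * ι (Qf m) u) + c₂ • (ι (Qf m) u * a) = 0) :
    a = 0 := by
  set v := ι (Qf m) u with hv
  set q := Qf m u with hq
  have hvv : v * v = algebraMap ℝ _ q := ι_sq_scalar (Qf m) u
  have hL : c₁ • (v * a * v) + (c₂ * q) • a = 0 := by
    have := congrArg (fun x => v * x) h
    simp only [mul_add, mul_smul_comm, mul_zero] at this
    rw [← mul_assoc, ← mul_assoc, hvv, ← Algebra.smul_def, smul_smul] at this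
    exact this
  have hR : (c₁ * q) • a + c₂ • (v * a * v) = 0 := by
    have := congrArg (fun x => x * v) h
    simp only [add_mul, smul_mul_assoc, zero_mul] at this
    rw [mul_assoc a v v, hvv, ← Algebra.commutes, ← Algebra.smul_def, smul_smul] at this
    exact this
  -- c₂ • hL - c₁ • hR
  have key : ((c₂ * c₂ - c₁ * c₁) * q) • a = 0 := by
    have expand : c₂ • (c₁ • (v * a * v) + (c₂ * q) • a)
        - c₁ • ((c₁ * q) • a + c₂ • (v * a * v))
        = ((c₂ * c₂ - c₁ * c₁) * q) • a := by module
    rw [hL, hR] at expand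
    simpa using expand.symm
  have hqs : ((c₂ * c₂ - c₁ * c₁) * q) ≠ 0 := by
    apply mul_ne_zero _ (Qf_ne_zero m u hu)
    intro hcc
    have : (c₂ - c₁) * (c₂ + c₁) = 0 := by ring_nf; linarith [hcc]
    rcases mul_eq_zero.mp this with h' | h'
    · exact h₁ (by linarith)
    · exact h₂ (by linarith)
  rcases smul_eq_zero.mp key with h' | h'
  · exact absurd h' hqs
  · exact h'

end
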